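/- arXiv:1508.00346 — 2 statements merged into one kernel-verified Lean document; each statement's English description precedes it below -/
import Mathlib

section
/- Under the setting of the previous orthogonality: let u solve -div(a∇u) = f in H¹₀(Ω) with ‖u²‖_a ≤ CH‖f‖_{L²(Ω)} for the bubble part. Let {ψ_i} and {φ_j} be two finite families in H¹₀(Ω), with each φ_j a-harmonic on every coarse cell D_i, and suppose span{φ_j|_Γ} = span{ψ_i|_Γ} where Γ = ⋃_i ∂D_i. Let u_h and u_h^{MS} be the respective Galerkin solutions. Then ‖u − u_h^{MS}‖_a² ≤ ‖u − u_h‖_a² + C²H²‖f‖²_{L²(Ω)}. -/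
open RealInnerProductSpace

/-- Proposition 3.1 (abstract form): the Hilbert space `V` is `H¹₀(Ω)` with the energy
inner product `a(·,·)`; `γ : V →ₗ Z` is the trace map onto the coarse skeleton `Γ`;
`M` is the subspace of functions that are `a`-harmonic on each coarse cell (a-harmonic
functions minimize the energy among functions with the same trace, and the bubble part
has zero trace).  If the traces of the multi-scale family `{φ j} ⊆ M` span the same
space as those of `{ψ i}`, and `u = u¹ + u²` with `u¹ ∈ M` and bubble `u²` satisfying
`‖u²‖_a ≤ C H ‖f‖_{L²}`, then the Galerkin solutions satisfy
`‖u − u_h^{MS}‖_a² ≤ ‖u − u_h‖_a² + C² H² ‖f‖²_{L²}`. -/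
theorem stmt_8 {V Z : Type*}
    [NormedAddCommGroup V] [InnerProductSpace ℝ V] [CompleteSpace V]
    [AddCommGroup Z] [Module ℝ Z]
    (γ : V →ₗ[ℝ] Z) (M : Submodule ℝ V)
    -- elements of `M` (cellwise a-harmonic functions) minimize energy among all
    -- functions with the same trace on `Γ`
    (hmin : ∀ (w : V) (m : V), m ∈ M → γ m = γ w → ‖m‖ ≤ ‖w‖)
    (C H Nf : ℝ) (hC : 0 < C) (hH : 0 < H) (hNf : 0 ≤ Nf)
    (u u1 u2 : V)
    (hdecomp : u = u1 + u2) (hu1 : u1 ∈ M)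
    -- the bubble part is `a`-orthogonal to cellwise `a`-harmonic functions
    (horth : ∀ w ∈ M, ⟪u2, w⟫ = 0)
    -- the bubble part has zero trace and is small: `‖u²‖_a ≤ C H ‖f‖_{L²}`
    (htrace : γ u2 = 0) (hbub : ‖u2‖ ≤ C * H * Nf)
    {m n : ℕ} (ψ : Fin m → V) (φ : Fin n → V) (hφM : ∀ j, φ j ∈ M)
    -- equal trace spans on the skeleton `Γ`
    (hspan : Submodule.span ℝ (Set.range (γ ∘ φ)) = Submodule.span ℝ (Set.range (γ ∘ ψ)))
    (uh uhMS : V)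
    (huh : uh ∈ Submodule.span ℝ (Set.range ψ))
    (huhMS : uhMS ∈ Submodule.span ℝ (Set.range φ))
    -- Galerkin conditions w.r.t. the energy inner product
    (hGal : ∀ v ∈ Submodule.span ℝ (Set.range ψ), ⟪uh, v⟫ = ⟪u, v⟫)
    (hGalMS : ∀ v ∈ Submodule.span ℝ (Set.range φ), ⟪uhMS, v⟫ = ⟪u, v⟫) :
    ‖u - uhMS‖ ^ 2 ≤ ‖u - uh‖ ^ 2 + C ^ 2 * H ^ 2 * Nf ^ 2 := by

  -- Find `v` in the MS space with the same trace as `uh`.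
  have hmem : γ uh ∈ Submodule.map γ (Submodule.span ℝ (Set.range φ)) := by
    rw [Submodule.map_span, ← Set.range_comp, hspan, Set.range_comp,
      ← Submodule.map_span]
    exact Submodule.mem_map_of_mem huh
  obtain ⟨v, hvS, hv⟩ := hmem
  have hSM : Submodule.span ℝ (Set.range φ) ≤ M := by
    rw [Submodule.span_le]; rintro _ ⟨j, rfl⟩; exact hφM j
  -- Galerkin optimality: `‖u - uhMS‖ ≤ ‖u - v‖`
  have hG : ‖u - uhMS‖ ^ 2 ≤ ‖u - v‖ ^ 2 := by
    have hdiff : uhMS - v ∈ Submodule.span ℝ (Set.range φ) :=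
      Submodule.sub_mem _ huhMS hvS
    have h0 : ⟪u - uhMS, uhMS - v⟫ = 0 := by
      rw [inner_sub_left, hGalMS _ hdiff, sub_self]
    have : ‖u - v‖ ^ 2 = ‖u - uhMS‖ ^ 2 + ‖uhMS - v‖ ^ 2 := by
      have := norm_add_sq_real (u - uhMS) (uhMS - v)
      rw [h0] at this
      simpa [sub_add_sub_cancel] using this
    nlinarith [sq_nonneg ‖uhMS - v‖]
  -- Orthogonal decomposition: `u - v = (u1 - v) + u2`.
  have hu1v : u1 - v ∈ M := Submodule.sub_mem _ hu1 (hSM hvS)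
  have hsplit : ‖u - v‖ ^ 2 = ‖u1 - v‖ ^ 2 + ‖u2‖ ^ 2 := by
    have h0 : ⟪u1 - v, u2⟫ = 0 := by
      rw [real_inner_comm]; exact horth _ hu1v
    have := norm_add_sq_real (u1 - v) u2
    rw [h0] at this
    have he : u - v = (u1 - v) + u2 := by rw [hdecomp]; abel
    rw [he]; linarith
  -- Energy minimality: `‖u1 - v‖ ≤ ‖u - uh‖`.
  have hm : ‖u1 - v‖ ≤ ‖u - uh‖ := by
    apply hmin
    · exact hu1v
    · rw [map_sub, map_sub, hv, hdecomp, map_add, htrace, add_zero]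
  have hb2 : ‖u2‖ ^ 2 ≤ C ^ 2 * H ^ 2 * Nf ^ 2 := by
    nlinarith [norm_nonneg u2, mul_nonneg (mul_nonneg hC.le hH.le) hNf]
  have hm2 : ‖u1 - v‖ ^ 2 ≤ ‖u - uh‖ ^ 2 := by
    nlinarith [norm_nonneg (u1 - v), norm_nonneg (u - uh)]
  linarith [hG, hsplit.le]
end

section
/- Let V, W be Hilbert spaces, P : V → W a compact operator, and V⁰ ⊆ V a closed subspace such that P vanishes on the orthogonal complement (V⁰)^⊥, i.e., P = P ∘ Π where Π is the orthogonal projection onto V⁰. Let Q : V → W be any bounded operator that agrees with P on V⁰. Then for every k, the k-th singular value satisfies σ_k(P) ≤ σ_k(Q). -/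
open RealInnerProductSpace

/-- The `k`-th singular value of an operator between Hilbert spaces, via the
max–min characterization: `σ_k(T) = sup_{dim V_k = k} inf_{u ∈ V_k, ‖u‖=1} ‖T u‖`. -/
noncomputable def singularValue {V W : Type*}
    [NormedAddCommGroup V] [InnerProductSpace ℝ V]
    [NormedAddCommGroup W] [InnerProductSpace ℝ W]
    (k : ℕ) (T : V →L[ℝ] W) : ℝ :=
  ⨆ U : {U : Submodule ℝ V // Module.finrank ℝ U = k},
    ⨅ u : {u : V // u ∈ U.1 ∧ ‖u‖ = 1}, ‖T u.1‖

/-- Any nonzero element of a submodule gives a unit vector in it. -/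
lemma aux_unit_vec {V : Type*} [NormedAddCommGroup V] [InnerProductSpace ℝ V]
    (U : Submodule ℝ V) {u : V} (hu : u ∈ U) (hne : u ≠ 0) :
    (‖u‖⁻¹ • u) ∈ U ∧ ‖‖u‖⁻¹ • u‖ = 1 := by
  refine ⟨U.smul_mem _ hu, ?_⟩
  have h : ‖u‖ ≠ 0 := norm_ne_zero_iff.mpr hne
  rw [norm_smul, norm_inv, norm_norm, inv_mul_cancel₀ h]

/-- The inf over unit vectors of a subspace of `‖T u‖` is bounded above by `max ‖T‖ 0`. -/
lemma aux_iInf_le {V W : Type*}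
    [NormedAddCommGroup V] [InnerProductSpace ℝ V]
    [NormedAddCommGroup W] [InnerProductSpace ℝ W]
    (T : V →L[ℝ] W) (U : Submodule ℝ V) :
    (⨅ u : {u : V // u ∈ U ∧ ‖u‖ = 1}, ‖T u.1‖) ≤ max ‖T‖ 0 := by
  by_cases h : Nonempty {u : V // u ∈ U ∧ ‖u‖ = 1}
  · obtain ⟨u⟩ := h
    refine le_trans (ciInf_le ⟨0, ?_⟩ u) (le_trans ?_ (le_max_left _ _))
    · rintro x ⟨v, rfl⟩; exact norm_nonneg _
    · calc ‖T u.1‖ ≤ ‖T‖ * ‖u.1‖ := T.le_opNorm _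
        _ = ‖T‖ := by rw [u.2.2, mul_one]
  · rw [not_nonempty_iff] at h
    rw [Real.iInf_of_isEmpty]
    exact le_max_right _ _

lemma aux_bddAbove {V W : Type*}
    [NormedAddCommGroup V] [InnerProductSpace ℝ V]
    [NormedAddCommGroup W] [InnerProductSpace ℝ W]
    (T : V →L[ℝ] W) (k : ℕ) :
    BddAbove (Set.range fun U : {U : Submodule ℝ V // Module.finrank ℝ U = k} =>
      ⨅ u : {u : V // u ∈ U.1 ∧ ‖u‖ = 1}, ‖T u.1‖) := by
  refine ⟨max ‖T‖ 0, ?_⟩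
  rintro x ⟨U, rfl⟩
  exact aux_iInf_le T U.1

/-- If the compact operator `P` vanishes on the orthogonal complement of a closed
subspace `V⁰` (i.e. `P = P ∘ Π` for the orthogonal projection `Π` onto `V⁰`), and the
bounded operator `Q` agrees with `P` on `V⁰`, then `σ_k(P) ≤ σ_k(Q)` for every `k`. -/
theorem stmt_9 {V W : Type*}
    [NormedAddCommGroup V] [InnerProductSpace ℝ V] [CompleteSpace V]
    [NormedAddCommGroup W] [InnerProductSpace ℝ W] [CompleteSpace W]
    (P Q : V →L[ℝ] W) (hP : IsCompactOperator P)
    (V0 : Submodule ℝ V) (hV0 : IsClosed (V0 : Set V))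
    (hPvanish : ∀ v ∈ V0ᗮ, P v = 0)
    (hagree : ∀ v ∈ V0, P v = Q v) :
    ∀ k : ℕ, singularValue k P ≤ singularValue k Q := by
  intro k
  haveI : CompleteSpace V0 := hV0.completeSpace_coe
  -- the projection onto V0, viewed as a map V → V
  set prj : V →ₗ[ℝ] V := V0.subtype.comp (Submodule.orthogonalProjectionOnto V0).toLinearMap with hprj
  have hprj_mem : ∀ v : V, prj v ∈ V0 := fun v => (Submodule.orthogonalProjectionOnto V0 v).2
  have hprj_norm : ∀ v : V, ‖prj v‖ ≤ ‖v‖ := by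
    intro v
    calc ‖prj v‖ = ‖Submodule.orthogonalProjectionOnto V0 v‖ := rfl
      _ ≤ ‖Submodule.orthogonalProjectionOnto V0‖ * ‖v‖ := (Submodule.orthogonalProjectionOnto V0).le_opNorm v
      _ ≤ 1 * ‖v‖ := by
          exact mul_le_mul_of_nonneg_right (Submodule.orthogonalProjectionOnto_norm_le V0) (norm_nonneg v)
      _ = ‖v‖ := one_mul _
  have hPprj : ∀ v : V, P (prj v) = P v := by
    intro v
    have h1 : P (v - prj v) = 0 :=
      hPvanish _ (Submodule.sub_starProjection_mem_orthogonal (K := V0) v)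
    have h2 : P v - P (prj v) = 0 := by rw [← map_sub]; exact h1
    exact (sub_eq_zero.mp h2).symm
  by_cases hne : Nonempty {U : Submodule ℝ V // Module.finrank ℝ U = k}
  · unfold singularValue
    refine ciSup_le fun U => ?_
    -- restriction of prj to U
    set f : U.1 →ₗ[ℝ] V := prj.domRestrict U.1 with hf
    by_cases hinj : Function.Injective f
    · -- the image subspace has the same finrank
      set U' : Submodule ℝ V := LinearMap.range f with hU'
      have hk' : Module.finrank ℝ U' = k := by
        rw [← U.2]; exact (LinearEquiv.ofInjective f hinj).finrank_eq.symm
      have key : (⨅ u : {u : V // u ∈ U.1 ∧ ‖u‖ = 1}, ‖P u.1‖) ≤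
          ⨅ u : {u : V // u ∈ U' ∧ ‖u‖ = 1}, ‖Q u.1‖ := by
        by_cases hW : Nonempty {u : V // u ∈ U' ∧ ‖u‖ = 1}
        · refine le_ciInf fun w => ?_
          obtain ⟨w, hwU', hw1⟩ := w
          obtain ⟨u, hu⟩ := hwU'
          -- u : U.1 , f u = w
          have hnw : ‖prj u.1‖ = 1 := by rw [show prj u.1 = w from hu, hw1]
          have hun : (1 : ℝ) ≤ ‖u.1‖ := by
            calc (1 : ℝ) = ‖prj u.1‖ := hnw.symm
              _ ≤ ‖u.1‖ := hprj_norm _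
          have hune : u.1 ≠ 0 := by
            intro h
            rw [h, norm_zero] at hun; linarith
          obtain ⟨hmem, hnorm⟩ := aux_unit_vec U.1 u.2 hune
          have step : ‖P (‖u.1‖⁻¹ • u.1)‖ ≤ ‖Q w‖ := by
            have hQw : Q w = P u.1 := by
              have hwV0 : w ∈ V0 := by rw [← hu]; exact hprj_mem _
              rw [← hagree w hwV0, ← hu]
              exact hPprj u.1
            rw [hQw, map_smul, norm_smul, norm_inv, norm_norm]
            have h1 : ‖u.1‖⁻¹ ≤ 1 := by
              rw [inv_le_one_iff₀]; right; exact hun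
            calc ‖u.1‖⁻¹ * ‖P u.1‖ ≤ 1 * ‖P u.1‖ :=
                  mul_le_mul_of_nonneg_right h1 (norm_nonneg _)
              _ = ‖P u.1‖ := one_mul _
          refine le_trans (ciInf_le ⟨0, ?_⟩ ⟨‖u.1‖⁻¹ • u.1, hmem, hnorm⟩) step
          rintro x ⟨v, rfl⟩; exact norm_nonneg _
        · -- U' has no unit vectors, hence U' = ⊥, hence U = ⊥ by injectivity
          rw [not_nonempty_iff] at hW
          have hU0 : ∀ u : V, u ∈ U.1 ∧ ‖u‖ = 1 → False := by
            rintro u ⟨hu, hnu⟩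
            have hne0 : u ≠ 0 := by
              intro h; rw [h, norm_zero] at hnu; norm_num at hnu
            have hfu : f ⟨u, hu⟩ ≠ 0 := by
              intro h
              exact hne0 (congrArg Subtype.val (hinj (a₁ := ⟨u, hu⟩) (a₂ := 0) (by
                simpa using h)))
            obtain ⟨h1, h2⟩ := aux_unit_vec U' (LinearMap.mem_range_self f ⟨u, hu⟩) hfu
            exact hW.false ⟨_, h1, h2⟩
          haveI : IsEmpty {u : V // u ∈ U.1 ∧ ‖u‖ = 1} := ⟨fun u => hU0 u.1 u.2⟩
          rw [Real.iInf_of_isEmpty, Real.iInf_of_isEmpty]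
        -- done
      exact le_trans key (le_ciSup (aux_bddAbove Q k) ⟨U', hk'⟩)
    · -- f not injective: some nonzero u ∈ U with prj u = 0, so P u = 0
      rw [injective_iff_map_eq_zero] at hinj
      push_neg at hinj
      obtain ⟨u, hu0, hune⟩ := hinj
      have hPu : P u.1 = 0 := by
        rw [← hPprj u.1, show prj u.1 = 0 from hu0, map_zero]
      have hune' : u.1 ≠ 0 := fun h => hune (Subtype.ext h)
      obtain ⟨hmem, hnorm⟩ := aux_unit_vec U.1 u.2 hune'
      have h0 : (⨅ v : {v : V // v ∈ U.1 ∧ ‖v‖ = 1}, ‖P v.1‖) ≤ 0 := by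
        refine le_trans (ciInf_le ⟨0, ?_⟩ ⟨‖u.1‖⁻¹ • u.1, hmem, hnorm⟩) ?_
        · rintro x ⟨v, rfl⟩; exact norm_nonneg _
        · rw [map_smul, hPu, smul_zero, norm_zero]
      refine le_trans h0 (le_trans (Real.iInf_nonneg fun v => norm_nonneg _)
        (le_ciSup (aux_bddAbove Q k) U))
  · rw [not_nonempty_iff] at hne
    unfold singularValue
    rw [Real.iSup_of_isEmpty, Real.iSup_of_isEmpty]
end
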